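/- Let μ ∈ H³((0,1),ℝ) (i.e. μ is C² with μ'' absolutely continuous and μ''' ∈ L²). Then as k → ∞, ⟨μφ₁, φ_k⟩ = 2∫₀¹ μ(x) sin(πx) sin(kπx) dx = 4[(−1)^{k+1} μ'(1) − μ'(0)]/(k³π²) + o(1/k³). -/

import Mathlib

open Real MeasureTheory Filter Asymptotics Topology

/-- `μ ∈ H³((0,1),ℝ)`: `μ` is `C²` with `μ''` absolutely continuous (primitive of some `g`)
and `μ''' = g ∈ L²(0,1)`. -/
def IsH3 (μ : ℝ → ℝ) : Prop :=
  ContDiff ℝ 2 μ ∧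
  ∃ g : ℝ → ℝ,
    MeasureTheory.MemLp g 2 (MeasureTheory.volume.restrict (Set.Ioc (0:ℝ) 1)) ∧
    ∀ x ∈ Set.Icc (0:ℝ) 1,
      deriv (deriv μ) x = deriv (deriv μ) 0 + ∫ t in (0:ℝ)..x, g t

/- ### Auxiliary lemmas -/

lemma hasDerivAt_sin_mul_aux (c x : ℝ) :
    HasDerivAt (fun y => Real.sin (c*y)) (c * Real.cos (c*x)) x := by
  have h1 : HasDerivAt (fun y : ℝ => c*y) c x := by
    simpa using (hasDerivAt_id x).const_mul c
  have h2 := (Real.hasDerivAt_sin (c*x)).comp x h1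
  exact h2.congr_deriv (by ring)

lemma hasDerivAt_cos_mul_aux (c x : ℝ) :
    HasDerivAt (fun y => Real.cos (c*y)) (-(c * Real.sin (c*x))) x := by
  have h1 : HasDerivAt (fun y : ℝ => c*y) c x := by
    simpa using (hasDerivAt_id x).const_mul c
  have h2 := (Real.hasDerivAt_cos (c*x)).comp x h1
  exact h2.congr_deriv (by ring)

/-- Riemann–Lebesgue lemma on `(0,1)` for `cos (nπx)` and `sin (nπx)`. -/
lemma rl_aux (h : ℝ → ℝ) (hh : IntegrableOn h (Set.Ioc (0:ℝ) 1)) :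
    Tendsto (fun n : ℕ => ∫ x in (0:ℝ)..1, h x * Real.cos (n*π*x)) atTop (𝓝 0) ∧
    Tendsto (fun n : ℕ => ∫ x in (0:ℝ)..1, h x * Real.sin (n*π*x)) atTop (𝓝 0) := by
  set f : ℝ → ℂ := Set.indicator (Set.Ioc (0:ℝ) 1) (fun x => (h x : ℂ)) with hfdef
  have hfi : Integrable f := by
    rw [hfdef, integrable_indicator_iff measurableSet_Ioc]
    exact hh.ofReal
  have hint : ∀ n : ℕ, Integrable (fun x => Complex.exp (((-(n*π*x) : ℝ) : ℂ) * Complex.I) * (h x : ℂ))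
      (volume.restrict (Set.Ioc (0:ℝ) 1)) := by
    intro n
    apply Integrable.bdd_mul (c := 1) hh.ofReal
    · apply Continuous.aestronglyMeasurable
      continuity
    · refine ae_of_all _ (fun x => ?_)
      rw [Complex.norm_exp]
      simp
  have key : ∀ n : ℕ, (FourierTransform.fourier f ((n:ℝ)/2))
      = ∫ x in Set.Ioc (0:ℝ) 1, Complex.exp (((-(n*π*x) : ℝ) : ℂ) * Complex.I) * (h x : ℂ) := by
    intro n
    rw [Real.fourier_real_eq_integral_exp_smul]
    have : ∀ v : ℝ, Complex.exp (((-2 * π * v * ((n:ℝ)/2) : ℝ) : ℂ) * Complex.I) • f v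
        = Set.indicator (Set.Ioc (0:ℝ) 1)
            (fun x => Complex.exp (((-(n*π*x) : ℝ) : ℂ) * Complex.I) * (h x : ℂ)) v := by
      intro v
      by_cases hv : v ∈ Set.Ioc (0:ℝ) 1
      · rw [hfdef]
        simp only [Set.indicator_of_mem hv, smul_eq_mul]
        congr 2
        push_cast
        ring
      · rw [hfdef]; simp [Set.indicator_of_notMem hv]
    simp_rw [this]
    rw [integral_indicator measurableSet_Ioc]
  have hlim : Tendsto (fun n : ℕ => FourierTransform.fourier f ((n:ℝ)/2)) atTop (𝓝 0) := by
    apply (Real.zero_at_infty_fourier f).comp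
    have h1 : Tendsto (fun n : ℕ => (n:ℝ)/2) atTop atTop :=
      tendsto_natCast_atTop_atTop.atTop_div_const two_pos
    rw [cocompact_eq_atBot_atTop]
    exact h1.mono_right le_sup_right
  constructor
  · have : (fun n : ℕ => ∫ x in (0:ℝ)..1, h x * Real.cos (n*π*x))
        = fun n : ℕ => (FourierTransform.fourier f ((n:ℝ)/2)).re := by
      funext n
      rw [key n]
      have hre := Complex.reCLM.integral_comp_comm (hint n)
      simp only [Complex.reCLM_apply] at hre
      rw [← hre, intervalIntegral.integral_of_le zero_le_one]
      congr 1
      funext x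
      simp only [Complex.mul_re, Complex.exp_ofReal_mul_I_re, Complex.exp_ofReal_mul_I_im,
        Complex.ofReal_re, Complex.ofReal_im, Real.cos_neg, Real.sin_neg, mul_zero, sub_zero,
        neg_mul, neg_zero]
      ring
    rw [this]
    have := (Complex.continuous_re.tendsto 0).comp hlim
    exact this
  · have : (fun n : ℕ => ∫ x in (0:ℝ)..1, h x * Real.sin (n*π*x))
        = fun n : ℕ => -(FourierTransform.fourier f ((n:ℝ)/2)).im := by
      funext n
      rw [key n]
      have him := Complex.imCLM.integral_comp_comm (hint n)
      simp only [Complex.imCLM_apply] at him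
      rw [← him, intervalIntegral.integral_of_le zero_le_one, ← integral_neg]
      congr 1
      funext x
      simp only [Complex.mul_im, Complex.exp_ofReal_mul_I_re, Complex.exp_ofReal_mul_I_im,
        Complex.ofReal_re, Complex.ofReal_im, Real.cos_neg, Real.sin_neg, mul_zero, add_zero,
        zero_mul, neg_mul]
      ring
    rw [this]
    have := (Complex.continuous_im.tendsto 0).comp hlim
    simpa using this.neg

/-- Integration by parts against `sin (kπx)` on `[0,1]`, multiplied form. -/
lemma ibp_sin (k : ℕ) (hk : k ≠ 0) (w w' : ℝ → ℝ)
    (hw : ∀ x, HasDerivAt w (w' x) x) (hw' : Continuous w') :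
    (∫ x in (0:ℝ)..1, w x * Real.sin (k*π*x)) * ((k:ℝ)*π)
      = (w 0 - (-1:ℝ)^k * w 1)
        + ∫ x in (0:ℝ)..1, w' x * Real.cos (k*π*x) := by
  have hkπ : (k:ℝ)*π ≠ 0 := mul_ne_zero (Nat.cast_ne_zero.2 hk) Real.pi_ne_zero
  have hv : ∀ x : ℝ, HasDerivAt (fun y => -Real.cos (k*π*y) / (k*π)) (Real.sin (k*π*x)) x := by
    intro x
    have h3 := ((hasDerivAt_cos_mul_aux ((k:ℝ)*π) x).neg.div_const ((k:ℝ)*π))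
    refine h3.congr_deriv ?_
    field_simp
  have := intervalIntegral.integral_mul_deriv_eq_deriv_mul
    (u := w) (u' := w') (v := fun y => -Real.cos (k*π*y) / (k*π)) (v' := fun y => Real.sin (k*π*y))
    (fun x _ => hw x) (fun x _ => hv x)
    (hw'.intervalIntegrable 0 1)
    ((Real.continuous_sin.comp (by continuity)).intervalIntegrable 0 1)
  rw [this]
  beta_reduce
  have hc1 : Real.cos ((k:ℝ)*π*1) = (-1:ℝ)^k := by
    rw [mul_one]
    simpa using Real.cos_nat_mul_pi_sub 0 k
  have hc0 : Real.cos ((k:ℝ)*π*0) = 1 := by norm_num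
  rw [hc1, hc0]
  have : ∀ x : ℝ, w' x * (-Real.cos (k*π*x) / (k*π)) = (w' x * Real.cos (k*π*x)) * (-(1/((k:ℝ)*π))) := by
    intro x; field_simp
  rw [intervalIntegral.integral_congr (g := fun x => (w' x * Real.cos (k*π*x)) * (-(1/((k:ℝ)*π))))
    (fun x _ => this x)]
  rw [intervalIntegral.integral_mul_const]
  field_simp
  ring

/-- Integration by parts against `cos (kπx)` on `[0,1]`, multiplied form. -/
lemma ibp_cos (k : ℕ) (hk : k ≠ 0) (w w' : ℝ → ℝ)
    (hw : ∀ x, HasDerivAt w (w' x) x) (hw' : Continuous w') :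
    (∫ x in (0:ℝ)..1, w x * Real.cos (k*π*x)) * ((k:ℝ)*π)
      = -∫ x in (0:ℝ)..1, w' x * Real.sin (k*π*x) := by
  have hkπ : (k:ℝ)*π ≠ 0 := mul_ne_zero (Nat.cast_ne_zero.2 hk) Real.pi_ne_zero
  have hv : ∀ x : ℝ, HasDerivAt (fun y => Real.sin (k*π*y) / (k*π)) (Real.cos (k*π*x)) x := by
    intro x
    have h3 := (hasDerivAt_sin_mul_aux ((k:ℝ)*π) x).div_const ((k:ℝ)*π)
    refine h3.congr_deriv ?_
    field_simp
  have := intervalIntegral.integral_mul_deriv_eq_deriv_mul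
    (u := w) (u' := w') (v := fun y => Real.sin (k*π*y) / (k*π)) (v' := fun y => Real.cos (k*π*y))
    (fun x _ => hw x) (fun x _ => hv x)
    (hw'.intervalIntegrable 0 1)
    ((Real.continuous_cos.comp (by continuity)).intervalIntegrable 0 1)
  rw [this]
  beta_reduce
  have hs1 : Real.sin ((k:ℝ)*π*1) = 0 := by rw [mul_one]; exact Real.sin_nat_mul_pi k
  have hs0 : Real.sin ((k:ℝ)*π*0) = 0 := by norm_num
  rw [hs1, hs0]
  have : ∀ x : ℝ, w' x * (Real.sin (k*π*x) / (k*π)) = (w' x * Real.sin (k*π*x)) * (1/((k:ℝ)*π)) := by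
    intro x; field_simp
  rw [intervalIntegral.integral_congr (g := fun x => (w' x * Real.sin (k*π*x)) * (1/((k:ℝ)*π)))
    (fun x _ => this x)]
  rw [intervalIntegral.integral_mul_const]
  field_simp
  ring

/-- Fubini for the primitive of an integrable function against a continuous weight. -/
lemma fubini_primitive (q ψ : ℝ → ℝ) (hq : IntegrableOn q (Set.Ioc (0:ℝ) 1))
    (hψ : Continuous ψ) :
    ∫ x in (0:ℝ)..1, (∫ t in (0:ℝ)..x, q t) * ψ x
      = ∫ t in (0:ℝ)..1, q t * ∫ x in t..(1:ℝ), ψ x := by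
  set μ₀ := volume.restrict (Set.Ioc (0:ℝ) 1) with hμ₀
  haveI : IsFiniteMeasure μ₀ := by
    constructor
    rw [hμ₀, Measure.restrict_apply_univ]
    simp [Real.volume_Ioc]
  set Φ : ℝ → ℝ → ℝ := fun x t => Set.indicator (Set.Ioc 0 x) q t * ψ x with hΦ
  obtain ⟨C, hC⟩ := isCompact_Icc.exists_bound_of_continuousOn (hψ.continuousOn (s := Set.Icc (0:ℝ) 1))
  have hS : MeasurableSet {p : ℝ × ℝ | 0 < p.2 ∧ p.2 ≤ p.1} := by
    apply MeasurableSet.inter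
    · exact measurableSet_lt measurable_const measurable_snd
    · exact measurableSet_le measurable_snd measurable_fst
  have hrep : Function.uncurry Φ
      = Set.indicator {p : ℝ × ℝ | 0 < p.2 ∧ p.2 ≤ p.1} (fun p => q p.2 * ψ p.1) := by
    funext p
    by_cases hp : p ∈ {p : ℝ × ℝ | 0 < p.2 ∧ p.2 ≤ p.1}
    · rw [Set.indicator_of_mem hp]
      simp only [Function.uncurry, hΦ]
      rw [Set.indicator_of_mem (by exact ⟨hp.1, hp.2⟩)]
    · rw [Set.indicator_of_notMem hp]
      simp only [Function.uncurry, hΦ]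
      rw [Set.indicator_of_notMem (by simpa [Set.mem_Ioc] using hp), zero_mul]
  have hqm : AEStronglyMeasurable (fun p : ℝ × ℝ => q p.2) (μ₀.prod μ₀) :=
    hq.aestronglyMeasurable.comp_snd
  have hmes : AEStronglyMeasurable (Function.uncurry Φ) (μ₀.prod μ₀) := by
    rw [hrep]
    exact (hqm.mul (hψ.comp continuous_fst).aestronglyMeasurable).indicator hS
  have hprodmem : ∀ᵐ p ∂(μ₀.prod μ₀), p ∈ (Set.Ioc (0:ℝ) 1) ×ˢ (Set.Ioc (0:ℝ) 1) := by
    rw [hμ₀, Measure.prod_restrict]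
    exact ae_restrict_mem (measurableSet_Ioc.prod measurableSet_Ioc)
  have hbound : Integrable (fun p : ℝ × ℝ => C * |q p.2|) (μ₀.prod μ₀) :=
    Integrable.mul_prod (integrable_const C) hq.abs
  have hF : Integrable (Function.uncurry Φ) (μ₀.prod μ₀) := by
    apply Integrable.mono' hbound hmes
    filter_upwards [hprodmem] with p hp
    have h1 : |Set.indicator (Set.Ioc 0 p.1) q p.2| ≤ |q p.2| := by
      by_cases h : p.2 ∈ Set.Ioc 0 p.1
      · rw [Set.indicator_of_mem h]
      · rw [Set.indicator_of_notMem h]; simp [abs_nonneg]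
    have h2 : |ψ p.1| ≤ C := by
      have := hC p.1 (Set.mem_Icc.2 ⟨le_of_lt hp.1.1, hp.1.2⟩)
      simpa using this
    calc ‖Function.uncurry Φ p‖ = |Set.indicator (Set.Ioc 0 p.1) q p.2| * |ψ p.1| := by
          simp [Function.uncurry, hΦ, abs_mul]
      _ ≤ |q p.2| * C := by
          apply mul_le_mul h1 h2 (abs_nonneg _) (abs_nonneg _)
      _ = C * |q p.2| := mul_comm _ _
  have hL : ∫ x in (0:ℝ)..1, (∫ t in (0:ℝ)..x, q t) * ψ x = ∫ x, (∫ t, Φ x t ∂μ₀) ∂μ₀ := by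
    rw [intervalIntegral.integral_of_le zero_le_one]
    apply setIntegral_congr_fun measurableSet_Ioc
    intro x hx
    beta_reduce
    have hx0 : (0:ℝ) ≤ x := le_of_lt hx.1
    have : ∫ t, Φ x t ∂μ₀ = (∫ t, Set.indicator (Set.Ioc 0 x) q t ∂μ₀) * ψ x := by
      rw [hΦ]; exact integral_mul_const _ _
    rw [this]
    congr 1
    rw [hμ₀, setIntegral_indicator measurableSet_Ioc]
    rw [intervalIntegral.integral_of_le hx0]
    congr 1
    rw [Set.Ioc_inter_Ioc]
    congr 1 <;> simp [hx.2]
  have hR : ∫ t, (∫ x, Φ x t ∂μ₀) ∂μ₀ = ∫ t in (0:ℝ)..1, q t * ∫ x in t..(1:ℝ), ψ x := by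
    rw [intervalIntegral.integral_of_le zero_le_one]
    apply setIntegral_congr_fun measurableSet_Ioc
    intro t ht
    beta_reduce
    have hpt : ∀ x : ℝ, Φ x t = Set.indicator (Set.Ici t) (fun x => q t * ψ x) x := by
      intro x
      by_cases h : t ≤ x
      · rw [Set.indicator_of_mem (Set.mem_Ici.2 h), hΦ]
        simp only
        rw [Set.indicator_of_mem (Set.mem_Ioc.2 ⟨ht.1, h⟩)]
      · rw [Set.indicator_of_notMem (by simpa using h), hΦ]
        simp only
        rw [Set.indicator_of_notMem (by simp [Set.mem_Ioc]; intro _; linarith), zero_mul]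
    simp_rw [hpt]
    rw [hμ₀, setIntegral_indicator measurableSet_Ici]
    have hset : Set.Ioc 0 1 ∩ Set.Ici t = Set.Icc t 1 := by
      ext y
      simp only [Set.mem_inter_iff, Set.mem_Ici, Set.mem_Ioc, Set.mem_Icc]
      constructor
      · rintro ⟨⟨_, h3⟩, h1⟩; exact ⟨h1, h3⟩
      · rintro ⟨h1, h2⟩; exact ⟨⟨lt_of_lt_of_le ht.1 h1, h2⟩, h1⟩
    rw [hset, integral_Icc_eq_integral_Ioc, ← intervalIntegral.integral_of_le ht.2]
    rw [intervalIntegral.integral_const_mul]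
  rw [hL, integral_integral_swap hF, hR]

/-- Explicit tail integral of `sin(πx) sin(kπx)`. -/
lemma sin_sin_tail (k : ℕ) (hk : 2 ≤ k) (t : ℝ) :
    ∫ x in t..(1:ℝ), Real.sin (π*x) * Real.sin (k*π*x)
      = -(Real.sin (((k:ℝ)-1)*π*t)/(2*((k:ℝ)-1)*π)) + Real.sin (((k:ℝ)+1)*π*t)/(2*((k:ℝ)+1)*π) := by
  have hk1 : (1:ℝ) ≤ (k:ℝ) := by exact_mod_cast Nat.one_le_of_lt hk
  have hk2 : (2:ℝ) ≤ (k:ℝ) := by exact_mod_cast hk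
  have ha : ((k:ℝ)-1) ≠ 0 := by intro h; linarith
  have hb : ((k:ℝ)+1) ≠ 0 := by positivity
  set a := ((k:ℝ)-1) with hadef
  set b := ((k:ℝ)+1) with hbdef
  have hΦ : ∀ x : ℝ, HasDerivAt (fun y => Real.sin (a*π*y)/(2*a*π) - Real.sin (b*π*y)/(2*b*π))
      (Real.sin (π*x) * Real.sin ((k:ℝ)*π*x)) x := by
    intro x
    have hda : HasDerivAt (fun y => Real.sin (a*π*y)) (a*π*Real.cos (a*π*x)) x :=
      hasDerivAt_sin_mul_aux (a*π) x
    have hdb : HasDerivAt (fun y => Real.sin (b*π*y)) (b*π*Real.cos (b*π*x)) x :=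
      hasDerivAt_sin_mul_aux (b*π) x
    have := (hda.div_const (2*a*π)).sub (hdb.div_const (2*b*π))
    refine this.congr_deriv ?_
    have e1 : a*π*Real.cos (a*π*x)/(2*a*π) = Real.cos (a*π*x)/2 := by
      field_simp
    have e2 : b*π*Real.cos (b*π*x)/(2*b*π) = Real.cos (b*π*x)/2 := by
      field_simp
    rw [e1, e2]
    have := Real.cos_sub_cos (a*π*x) (b*π*x)
    have harg1 : (a*π*x + b*π*x)/2 = (k:ℝ)*π*x := by rw [hadef, hbdef]; ring
    have harg2 : (a*π*x - b*π*x)/2 = -(π*x) := by rw [hadef, hbdef]; ring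
    rw [harg1, harg2, Real.sin_neg] at this
    have : Real.cos (a*π*x) - Real.cos (b*π*x) = 2 * Real.sin ((k:ℝ)*π*x) * Real.sin (π*x) := by
      rw [this]; ring
    linear_combination this / 2
  have hcont : Continuous (fun x => Real.sin (π*x) * Real.sin ((k:ℝ)*π*x)) := by continuity
  have := intervalIntegral.integral_eq_sub_of_hasDerivAt (a := t) (b := 1)
    (fun x _ => hΦ x) (hcont.intervalIntegrable t 1)
  rw [this]
  have hsa : Real.sin (a*π*1) = 0 := by
    rw [mul_one, hadef]
    have : ((k:ℝ)-1) = ((k-1 : ℕ) : ℝ) := by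
      have : 1 ≤ k := Nat.one_le_of_lt hk
      push_cast [this]
      ring
    rw [this]
    exact Real.sin_nat_mul_pi (k-1)
  have hsb : Real.sin (b*π*1) = 0 := by
    rw [mul_one, hbdef]
    have : ((k:ℝ)+1) = ((k+1 : ℕ) : ℝ) := by push_cast; ring
    rw [this]
    exact Real.sin_nat_mul_pi (k+1)
  rw [hsa, hsb]
  ring

set_option maxHeartbeats 2000000 in
/-- For `μ ∈ H³`, as `k → ∞`:
`⟨μφ₁,φ_k⟩ = 2∫₀¹ μ(x) sin(πx) sin(kπx) dx = 4[(−1)^{k+1}μ'(1) − μ'(0)]/(k³π²) + o(1/k³)`. -/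
theorem asymptotics_of_moment_coefficients (μ : ℝ → ℝ) (hμ : IsH3 μ) :
    (fun k : ℕ =>
        (2 * ∫ x in (0:ℝ)..1, μ x * Real.sin (Real.pi * x) * Real.sin (k * Real.pi * x)) -
          4 * ((-1 : ℝ) ^ (k + 1) * deriv μ 1 - deriv μ 0) / ((k : ℝ) ^ 3 * Real.pi ^ 2))
      =o[atTop] fun k : ℕ => 1 / (k : ℝ) ^ 3 := by
  obtain ⟨h2, g, hg2, hgrep⟩ := hμ
  -- regularity facts
  have hdiff : Differentiable ℝ μ := h2.differentiable (by norm_num)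
  have hder1 : ∀ x, HasDerivAt μ (deriv μ x) x := fun x => (hdiff x).hasDerivAt
  have hcd1 : ContDiff ℝ 1 (deriv μ) := by
    have h2' : ContDiff ℝ (1+1) μ := by
      have : ((1:WithTop ℕ∞)+1) = 2 := by norm_num
      rw [this]
      exact h2
    exact (contDiff_succ_iff_deriv.mp h2').2.2
  have hdiff1 : Differentiable ℝ (deriv μ) := (contDiff_one_iff_deriv.mp hcd1).1
  have hder2 : ∀ x, HasDerivAt (deriv μ) (deriv (deriv μ) x) x := fun x => (hdiff1 x).hasDerivAt
  have hcμ : Continuous μ := hdiff.continuous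
  have hc1 : Continuous (deriv μ) := hdiff1.continuous
  have hc2 : Continuous (deriv (deriv μ)) := (contDiff_one_iff_deriv.mp hcd1).2
  haveI : IsFiniteMeasure (volume.restrict (Set.Ioc (0:ℝ) 1)) := by
    constructor
    rw [Measure.restrict_apply_univ]
    simp [Real.volume_Ioc]
  have hgi : IntegrableOn g (Set.Ioc (0:ℝ) 1) := by
    have := hg2.mono_exponent (p := 1) (by norm_num)
    exact memLp_one_iff_integrable.mp this
  -- basic continuous functions
  have hcsinK : ∀ c : ℝ, Continuous (fun x : ℝ => Real.sin (c*x)) := fun c =>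
    Real.continuous_sin.comp (continuous_const.mul continuous_id)
  have hccosK : ∀ c : ℝ, Continuous (fun x : ℝ => Real.cos (c*x)) := fun c =>
    Real.continuous_cos.comp (continuous_const.mul continuous_id)
  have hcsin : Continuous (fun x : ℝ => Real.sin (π*x)) := hcsinK π
  have hccos : Continuous (fun x : ℝ => Real.cos (π*x)) := hccosK π
  -- the sequences
  set I : ℕ → ℝ := fun k => ∫ x in (0:ℝ)..1, μ x * Real.sin (π * x) * Real.sin (↑k * π * x)
    with hIdef
  set C1 : ℕ → ℝ := fun k => ∫ x in (0:ℝ)..1,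
      (deriv μ x * Real.sin (π*x) + μ x * (π * Real.cos (π*x))) * Real.cos (↑k * π * x) with hC1def
  set R1 : ℕ → ℝ := fun k => ∫ x in (0:ℝ)..1,
      (deriv (deriv μ) 0 * (π * Real.cos (π*x))) * Real.cos (↑k * π * x) with hR1def
  set R2 : ℕ → ℝ := fun k => ∫ x in (0:ℝ)..1,
      (deriv (deriv μ) x * Real.cos (π*x) + deriv μ x * -(π * Real.sin (π*x)))
        * Real.cos (↑k * π * x) with hR2def
  set Gs : ℕ → ℝ := fun m => ∫ t in (0:ℝ)..1, g t * Real.sin (↑m * π * t) with hGsdef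
  -- limits via Riemann–Lebesgue
  have hC1lim : Tendsto C1 atTop (𝓝 0) :=
    (rl_aux _ (((hc1.mul hcsin).add (hcμ.mul (continuous_const.mul hccos))).integrableOn_Ioc)).1
  have hR1lim : Tendsto R1 atTop (𝓝 0) :=
    (rl_aux _ ((continuous_const.mul (continuous_const.mul hccos)).integrableOn_Ioc)).1
  have hR2lim : Tendsto R2 atTop (𝓝 0) :=
    (rl_aux _ (((hc2.mul hccos).add (hc1.mul (continuous_const.mul hcsin).neg)).integrableOn_Ioc)).1
  have hGslim : Tendsto Gs atTop (𝓝 0) := (rl_aux g hgi).2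
  -- coefficient limits
  have hcoef1 : Tendsto (fun k : ℕ => (k:ℝ)/(((k-1:ℕ)):ℝ)) atTop (𝓝 1) := by
    have h0 : Tendsto (fun k : ℕ => (((k-1:ℕ)):ℝ)) atTop atTop :=
      tendsto_natCast_atTop_atTop.comp (tendsto_sub_atTop_nat 1)
    have h1 : Tendsto (fun k : ℕ => 1 + ((((k-1:ℕ)):ℝ))⁻¹) atTop (𝓝 1) := by
      simpa using tendsto_const_nhds.add h0.inv_tendsto_atTop
    apply h1.congr'
    filter_upwards [eventually_ge_atTop 2] with k hk
    have h1k : 1 ≤ k := le_trans (by norm_num) hk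
    have hcast : (((k-1:ℕ)):ℝ) = (k:ℝ) - 1 := by push_cast [h1k]; ring
    have hne : (((k-1:ℕ)):ℝ) ≠ 0 := by
      rw [hcast]
      have : (2:ℝ) ≤ (k:ℝ) := by exact_mod_cast hk
      intro h; linarith
    rw [hcast] at hne
    rw [hcast]
    field_simp
    try ring
  have hcoef2 : Tendsto (fun k : ℕ => (k:ℝ)/(((k+1:ℕ)):ℝ)) atTop (𝓝 1) := by
    have h0 : Tendsto (fun k : ℕ => (((k+1:ℕ)):ℝ)) atTop atTop :=
      tendsto_natCast_atTop_atTop.comp (tendsto_add_atTop_nat 1)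
    have h1 : Tendsto (fun k : ℕ => 1 - ((((k+1:ℕ)):ℝ))⁻¹) atTop (𝓝 1) := by
      simpa using tendsto_const_nhds.sub h0.inv_tendsto_atTop
    apply h1.congr'
    filter_upwards [eventually_ge_atTop 1] with k hk
    have hne : (((k+1:ℕ)):ℝ) ≠ 0 := by positivity
    have hcast : (((k+1:ℕ)):ℝ) = (k:ℝ) + 1 := by push_cast; ring
    rw [hcast] at hne ⊢
    field_simp
    try ring
  -- the comparison sequence
  set E : ℕ → ℝ := fun k =>
    (2/π) * C1 k + (-(2/π^3)) * R1 k
      + ((k:ℝ)/(((k-1:ℕ)):ℝ)) * ((1/π^3) * Gs (k-1))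
      + (-(((k:ℝ)/(((k+1:ℕ)):ℝ)) * ((1/π^3) * Gs (k+1))))
      + (-(4/π^2)) * R2 k with hEdef
  have hElim : Tendsto E atTop (𝓝 0) := by
    have l1 := hC1lim.const_mul (2/π)
    have l2 := hR1lim.const_mul (-(2/π^3))
    have l3 := hcoef1.mul ((hGslim.comp (tendsto_sub_atTop_nat 1)).const_mul (1/π^3))
    have l4 := (hcoef2.mul ((hGslim.comp (tendsto_add_atTop_nat 1)).const_mul (1/π^3))).neg
    have l5 := hR2lim.const_mul (-(4/π^2))
    have htot := (((l1.add l2).add l3).add l4).add l5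
    have hz : (2/π * (0:ℝ) + (-(2/π^3))*0 + 1*((1/π^3)*0) + -(1*((1/π^3)*0)) + (-(4/π^2))*0) = 0 := by
      ring
    rw [hz] at htot
    exact htot
  rw [Asymptotics.isLittleO_iff_tendsto]
  · apply Tendsto.congr' _ hElim
    filter_upwards [eventually_ge_atTop 2] with k hk
    -- nonzeroness
    have hk0 : k ≠ 0 := by omega
    have h1k : 1 ≤ k := by omega
    have hK2 : (2:ℝ) ≤ (k:ℝ) := by exact_mod_cast hk
    have hK0 : (k:ℝ) ≠ 0 := by intro h; linarith
    have hπ : (π:ℝ) ≠ 0 := Real.pi_ne_zero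
    have hKm1 : (k:ℝ) - 1 ≠ 0 := by intro h; linarith
    have hKp1 : (k:ℝ) + 1 ≠ 0 := by intro h; linarith
    have hacast : (((k-1:ℕ)):ℝ) = (k:ℝ) - 1 := by push_cast [h1k]; ring
    have hbcast : (((k+1:ℕ)):ℝ) = (k:ℝ) + 1 := by push_cast; ring
    have z0 : Real.sin (π*(0:ℝ)) = 0 := by norm_num
    have z1 : Real.sin (π*(1:ℝ)) = 0 := by simp [Real.sin_pi]
    -- IBP 1 : I k * (kπ) = C1 k
    have e1 : I k * ((k:ℝ)*π) = C1 k := by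
      have h := ibp_sin k hk0 (fun x => μ x * Real.sin (π*x))
        (fun x => deriv μ x * Real.sin (π*x) + μ x * (π * Real.cos (π*x)))
        (fun x => (hder1 x).mul (hasDerivAt_sin_mul_aux π x))
        ((hc1.mul hcsin).add (hcμ.mul (continuous_const.mul hccos)))
      beta_reduce at h
      rw [z0, z1] at h
      simpa using h
    -- IBP 2 : C1 k * (kπ) = -Jk
    set Jk : ℝ := ∫ x in (0:ℝ)..1,
      ((deriv (deriv μ) x * Real.sin (π*x) + deriv μ x * (π * Real.cos (π*x)))
        + (deriv μ x * (π * Real.cos (π*x)) + μ x * (π * -(π * Real.sin (π*x)))))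
        * Real.sin (↑k * π * x) with hJkdef
    have e2 : C1 k * ((k:ℝ)*π) = -Jk := by
      have h := ibp_cos k hk0
        (fun x => deriv μ x * Real.sin (π*x) + μ x * (π * Real.cos (π*x)))
        (fun x => (deriv (deriv μ) x * Real.sin (π*x) + deriv μ x * (π * Real.cos (π*x)))
          + (deriv μ x * (π * Real.cos (π*x)) + μ x * (π * -(π * Real.sin (π*x)))))
        (fun x => ((hder2 x).mul (hasDerivAt_sin_mul_aux π x)).add
          ((hder1 x).mul ((hasDerivAt_cos_mul_aux π x).const_mul π)))
        (((hc2.mul hcsin).add (hc1.mul (continuous_const.mul hccos))).add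
          ((hc1.mul (continuous_const.mul hccos)).add
            (hcμ.mul (continuous_const.mul (continuous_const.mul hcsin).neg))))
      exact h
    -- split J
    set T1 : ℝ := ∫ x in (0:ℝ)..1,
      deriv (deriv μ) x * Real.sin (π*x) * Real.sin (↑k * π * x) with hT1def
    set T2 : ℝ := ∫ x in (0:ℝ)..1,
      deriv μ x * Real.cos (π*x) * Real.sin (↑k * π * x) with hT2def
    have i1 : IntervalIntegrable
        (fun x => deriv (deriv μ) x * Real.sin (π*x) * Real.sin (↑k * π * x)) volume 0 1 :=
      ((hc2.mul hcsin).mul (hcsinK ((k:ℝ)*π))).intervalIntegrable 0 1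
    have i2 : IntervalIntegrable
        (fun x => (2*π) * (deriv μ x * Real.cos (π*x) * Real.sin (↑k * π * x))) volume 0 1 :=
      (continuous_const.mul ((hc1.mul hccos).mul (hcsinK ((k:ℝ)*π)))).intervalIntegrable 0 1
    have i3 : IntervalIntegrable
        (fun x => (-(π^2)) * (μ x * Real.sin (π*x) * Real.sin (↑k * π * x))) volume 0 1 :=
      (continuous_const.mul ((hcμ.mul hcsin).mul (hcsinK ((k:ℝ)*π)))).intervalIntegrable 0 1
    have e3 : Jk = T1 + ((2*π) * T2 + (-(π^2)) * I k) := by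
      rw [hJkdef]
      rw [intervalIntegral.integral_congr
        (g := fun x => deriv (deriv μ) x * Real.sin (π*x) * Real.sin (↑k * π * x)
          + ((2*π) * (deriv μ x * Real.cos (π*x) * Real.sin (↑k * π * x))
            + (-(π^2)) * (μ x * Real.sin (π*x) * Real.sin (↑k * π * x))))
        (fun x _ => by ring)]
      rw [intervalIntegral.integral_add i1 (i2.add i3), intervalIntegral.integral_add i2 i3,
        intervalIntegral.integral_const_mul, intervalIntegral.integral_const_mul]
    -- split T1 using the representation of μ''
    set A : ℝ := ∫ x in (0:ℝ)..1,
      (deriv (deriv μ) 0 * Real.sin (π*x)) * Real.sin (↑k * π * x) with hAdef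
    set S : ℝ := ∫ x in (0:ℝ)..1,
      (∫ t in (0:ℝ)..x, g t) * (Real.sin (π*x) * Real.sin (↑k * π * x)) with hSdef
    have hFcont : ContinuousOn (fun x => ∫ t in (0:ℝ)..x, g t) (Set.Icc 0 1) := by
      have hgIcc : IntegrableOn g (Set.Icc (0:ℝ) 1) :=
        (integrableOn_Icc_iff_integrableOn_Ioc).2 hgi
      have := intervalIntegral.continuousOn_primitive (f := g) (a := (0:ℝ)) (b := 1) (μ := volume) hgIcc
      apply this.congr
      intro x hx
      exact intervalIntegral.integral_of_le hx.1
    have iS : IntervalIntegrable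
        (fun x => (∫ t in (0:ℝ)..x, g t) * (Real.sin (π*x) * Real.sin (↑k * π * x)))
        volume 0 1 := by
      rw [intervalIntegrable_iff_integrableOn_Ioc_of_le zero_le_one]
      apply IntegrableOn.mono_set _ Set.Ioc_subset_Icc_self
      exact (hFcont.mul ((hcsin.mul (hcsinK ((k:ℝ)*π))).continuousOn)).integrableOn_Icc
    have iA : IntervalIntegrable
        (fun x => (deriv (deriv μ) 0 * Real.sin (π*x)) * Real.sin (↑k * π * x)) volume 0 1 :=
      ((continuous_const.mul hcsin).mul (hcsinK ((k:ℝ)*π))).intervalIntegrable 0 1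
    have e4 : T1 = A + S := by
      rw [hT1def]
      rw [intervalIntegral.integral_congr
        (g := fun x => (deriv (deriv μ) 0 * Real.sin (π*x)) * Real.sin (↑k * π * x)
          + (∫ t in (0:ℝ)..x, g t) * (Real.sin (π*x) * Real.sin (↑k * π * x)))
        (fun x hx => by
          rw [Set.uIcc_of_le zero_le_one] at hx
          rw [hgrep x hx]
          ring)]
      rw [intervalIntegral.integral_add iA iS]
    -- IBP for A
    have e5 : A * ((k:ℝ)*π) = R1 k := by
      have h := ibp_sin k hk0 (fun x => deriv (deriv μ) 0 * Real.sin (π*x))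
        (fun x => deriv (deriv μ) 0 * (π * Real.cos (π*x)))
        (fun x => (hasDerivAt_sin_mul_aux π x).const_mul (deriv (deriv μ) 0))
        (continuous_const.mul (continuous_const.mul hccos))
      beta_reduce at h
      rw [z0, z1] at h
      simpa using h
    -- IBP for T2
    have e6 : T2 * ((k:ℝ)*π) = (deriv μ 0 + (-1:ℝ)^k * deriv μ 1) + R2 k := by
      have h := ibp_sin k hk0 (fun x => deriv μ x * Real.cos (π*x))
        (fun x => deriv (deriv μ) x * Real.cos (π*x) + deriv μ x * -(π * Real.sin (π*x)))
        (fun x => (hder2 x).mul (hasDerivAt_cos_mul_aux π x))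
        ((hc2.mul hccos).add (hc1.mul (continuous_const.mul hcsin).neg))
      beta_reduce at h
      have c0 : Real.cos (π*(0:ℝ)) = 1 := by norm_num
      have c1' : Real.cos (π*(1:ℝ)) = -1 := by simp [Real.cos_pi]
      rw [c0, c1'] at h
      rw [h]
      ring
    -- Fubini + explicit tail for S
    have e7 : S = -(1/(2*(((k-1:ℕ)):ℝ)*π)) * Gs (k-1) + (1/(2*(((k+1:ℕ)):ℝ)*π)) * Gs (k+1) := by
      rw [hSdef]
      rw [fubini_primitive g (fun x => Real.sin (π*x) * Real.sin (↑k * π * x)) hgi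
        (hcsin.mul (hcsinK ((k:ℝ)*π)))]
      rw [intervalIntegral.integral_congr
        (g := fun t => -(1/(2*(((k-1:ℕ)):ℝ)*π)) * (g t * Real.sin ((((k-1:ℕ)):ℝ) * π * t))
          + (1/(2*(((k+1:ℕ)):ℝ)*π)) * (g t * Real.sin ((((k+1:ℕ)):ℝ) * π * t)))
        (fun t _ => by
          rw [sin_sin_tail k hk t, hacast, hbcast]
          ring)]
      have j1 : IntervalIntegrable
          (fun t => -(1/(2*(((k-1:ℕ)):ℝ)*π)) * (g t * Real.sin ((((k-1:ℕ)):ℝ) * π * t)))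
          volume 0 1 := by
        rw [intervalIntegrable_iff_integrableOn_Ioc_of_le zero_le_one]
        apply Integrable.const_mul
        have : (fun t => g t * Real.sin ((((k-1:ℕ)):ℝ) * π * t))
            = fun t => Real.sin ((((k-1:ℕ)):ℝ) * π * t) * g t := by
          funext t; ring
        rw [this]
        apply hgi.bdd_mul (c := 1) (hcsinK ((((k-1:ℕ)):ℝ)*π)).aestronglyMeasurable
        exact ae_of_all _ (fun t => by simpa using Real.abs_sin_le_one _)
      have j2 : IntervalIntegrable
          (fun t => (1/(2*(((k+1:ℕ)):ℝ)*π)) * (g t * Real.sin ((((k+1:ℕ)):ℝ) * π * t)))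
          volume 0 1 := by
        rw [intervalIntegrable_iff_integrableOn_Ioc_of_le zero_le_one]
        apply Integrable.const_mul
        have : (fun t => g t * Real.sin ((((k+1:ℕ)):ℝ) * π * t))
            = fun t => Real.sin ((((k+1:ℕ)):ℝ) * π * t) * g t := by
          funext t; ring
        rw [this]
        apply hgi.bdd_mul (c := 1) (hcsinK ((((k+1:ℕ)):ℝ)*π)).aestronglyMeasurable
        exact ae_of_all _ (fun t => by simpa using Real.abs_sin_le_one _)
      rw [intervalIntegral.integral_add j1 j2,
        intervalIntegral.integral_const_mul, intervalIntegral.integral_const_mul]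
    -- assemble
    have s1 : Jk = -(I k * ((k:ℝ)^2*π^2)) := by linear_combination ((k:ℝ)*π)*e1 + e2
    have s3 : I k * (π^2*((k:ℝ)^2 - 1)) = -(T1 + 2*π*T2) := by
      linear_combination s1 - e3
    have hKsq : π^2*((k:ℝ)^2 - 1) ≠ 0 := by
      have h4 : (4:ℝ) ≤ (k:ℝ)^2 := by nlinarith
      have : (k:ℝ)^2 - 1 ≠ 0 := by intro h; nlinarith
      exact mul_ne_zero (pow_ne_zero 2 hπ) this
    have s4 : I k = -(T1 + 2*π*T2) / (π^2*((k:ℝ)^2 - 1)) := (eq_div_iff hKsq).mpr s3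
    have sA : A = R1 k / ((k:ℝ)*π) := (eq_div_iff (mul_ne_zero hK0 hπ)).mpr e5
    have sT2 : T2 = ((deriv μ 0 + (-1:ℝ)^k * deriv μ 1) + R2 k) / ((k:ℝ)*π) :=
      (eq_div_iff (mul_ne_zero hK0 hπ)).mpr e6
    show E k
      = (2 * I k - 4 * ((-1:ℝ)^(k+1) * deriv μ 1 - deriv μ 0) / ((k:ℝ)^3 * π^2)) / (1/(k:ℝ)^3)
    rw [hEdef]
    simp only []
    rw [← e1, s4, e4, e7, sA, sT2, hacast, hbcast, pow_succ]
    have hK21 : (k:ℝ)^2 - 1 ≠ 0 := by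
      have h4 : (4:ℝ) ≤ (k:ℝ)^2 := by nlinarith
      intro h; nlinarith
    field_simp [hK21, hK0, hπ, hKm1, hKp1]
    ring
  · intro x hx
    have hx0 : (x:ℝ) = 0 := by
      by_contra h
      exact (one_div_ne_zero (pow_ne_zero 3 h)) hx
    have : x = 0 := by exact_mod_cast hx0
    subst this
    simp
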